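/- Degeneracy for rational k: let k = q/p with p, q coprime positive integers, and suppose η̃₁ on T² solves the torus traveling-wave equation (whose residual at (α₁,α₂) depends only on the 1d slices α ↦ η̃(α, θ + kα)). Then for any 2π-periodic real-analytic α₀(r), the function η̃₂(α₁,α₂) = η̃₁(α₁ − p·α₀(−qα₁+pα₂), α₂ − q·α₀(−qα₁+pα₂)) satisfies η̃₂(α, θ+kα) = η̃₁(α − p·α₀(pθ), θ + k(α − p·α₀(pθ))), i.e., each slice of η̃₂ is a translate of the corresponding slice of η̃₁; hence η̃₂ is also a solution. -/

import Mathlib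

open Real

/-- Degeneracy for rational `k = q/p`: if `η̃₁` on the torus has all its slices
`α ↦ η̃₁(α, θ + kα)` solving the (translation-invariant) 1d traveling-wave
equation, then for any `2π`-periodic `α₀` the reparametrized function
`η̃₂(α₁,α₂) = η̃₁(α₁ - p·α₀(-qα₁+pα₂), α₂ - q·α₀(-qα₁+pα₂))` has each slice a
translate of the corresponding slice of `η̃₁`, hence is also a solution. -/
theorem stmt_17 (p q : ℕ) (hp : 0 < p) (hq : 0 < q) (hcop : Nat.Coprime p q)
    (k : ℝ) (hk : k = (q : ℝ) / (p : ℝ))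
    (η₁ : ℝ → ℝ → ℝ) (α₀ : ℝ → ℝ) (hper : ∀ r : ℝ, α₀ (r + 2 * π) = α₀ r)
    (Sol : (ℝ → ℝ) → Prop)
    (hSolTrans : ∀ (f : ℝ → ℝ) (s : ℝ), Sol f → Sol (fun a => f (a - s)))
    (hsol : ∀ θ : ℝ, Sol (fun a => η₁ a (θ + k * a)))
    (η₂ : ℝ → ℝ → ℝ)
    (hη₂ : η₂ = fun a1 a2 => η₁ (a1 - (p : ℝ) * α₀ (-(q : ℝ) * a1 + (p : ℝ) * a2))
        (a2 - (q : ℝ) * α₀ (-(q : ℝ) * a1 + (p : ℝ) * a2))) :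
    (∀ α θ : ℝ, η₂ α (θ + k * α) =
      η₁ (α - (p : ℝ) * α₀ ((p : ℝ) * θ))
        (θ + k * (α - (p : ℝ) * α₀ ((p : ℝ) * θ)))) ∧
    (∀ θ : ℝ, Sol (fun a => η₂ a (θ + k * a))) := by
  have hp0 : (p : ℝ) ≠ 0 := by positivity
  have hkp : k * (p : ℝ) = (q : ℝ) := by rw [hk, div_mul_cancel₀ _ hp0]
  have key : ∀ α θ : ℝ, η₂ α (θ + k * α) =
      η₁ (α - (p : ℝ) * α₀ ((p : ℝ) * θ))
        (θ + k * (α - (p : ℝ) * α₀ ((p : ℝ) * θ))) := by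
    intro α θ
    have harg : -(q : ℝ) * α + (p : ℝ) * (θ + k * α) = (p : ℝ) * θ := by
      have : (p : ℝ) * (k * α) = (q : ℝ) * α := by
        rw [← hkp]; ring
      ring_nf
      linarith [this]
    rw [hη₂]
    simp only [harg]
    congr 1
    have : (q : ℝ) * α₀ ((p : ℝ) * θ) = k * ((p : ℝ) * α₀ ((p : ℝ) * θ)) := by
      rw [← hkp]; ring
    rw [this]; ring
  refine ⟨key, fun θ => ?_⟩
  have := hSolTrans (fun a => η₁ a (θ + k * a)) ((p : ℝ) * α₀ ((p : ℝ) * θ)) (hsol θ)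
  convert this using 1
  funext a
  exact key a θ
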